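/- Let T ≥ 1 be an integer, (α_s)_{s=1}^T a nonnegative real sequence, β_2 ∈ (0,1] and ε > 0. Define θ_s = Σ_{j=1}^s β_2^{s−j} α_j. Then for every t ∈ [T]: Σ_{j=1}^t α_j/(ε + θ_j) ≤ log(1 + θ_t/ε) − t·log β_2. -/

import Mathlib

/-- Key inequality: for `0 ≤ a`, `0 < c ≤ x - a`, we have `a / x ≤ log x - log c`. -/
lemma key_ineq (a x c : ℝ) (ha : 0 ≤ a) (hc : 0 < c) (hcx : c ≤ x - a) :
    a / x ≤ Real.log x - Real.log c := by
  have hx : 0 < x := lt_of_lt_of_le (by linarith) (by linarith)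
  have h1 : Real.log (c / x) ≤ c / x - 1 :=
    Real.log_le_sub_one_of_pos (div_pos hc hx)
  have h2 : Real.log (c / x) = Real.log c - Real.log x := Real.log_div hc.ne' hx.ne'
  have h3 : c / x ≤ (x - a) / x := by
    gcongr
  have h4 : (x - a) / x - 1 = -(a / x) := by field_simp; ring
  nlinarith [h1, h2, h3, h4]

theorem stmt6 (T : ℕ) (hT : 1 ≤ T) (α : ℕ → ℝ) (hα : ∀ s, 0 ≤ α s)
    (β2 : ℝ) (hβ2pos : 0 < β2) (hβ2le : β2 ≤ 1) (ε : ℝ) (hε : 0 < ε)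
    (θ : ℕ → ℝ) (hθ : ∀ s, θ s = ∑ j ∈ Finset.Icc 1 s, β2 ^ (s - j) * α j) :
    ∀ t ∈ Finset.Icc 1 T,
      ∑ j ∈ Finset.Icc 1 t, α j / (ε + θ j) ≤
        Real.log (1 + θ t / ε) - t * Real.log β2 := by
  have hθnn : ∀ s, 0 ≤ θ s := by
    intro s
    rw [hθ]
    exact Finset.sum_nonneg fun j _ => mul_nonneg (pow_nonneg hβ2pos.le _) (hα j)
  have hθpos : ∀ s, 0 < ε + θ s := fun s => by linarith [hθnn s]
  have hθ0 : θ 0 = 0 := by simp [hθ]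
  have hrec : ∀ n, θ (n + 1) = β2 * θ n + α (n + 1) := by
    intro n
    rw [hθ, hθ, Finset.sum_Icc_succ_top (by omega : 1 ≤ n + 1)]
    simp only [Nat.sub_self, pow_zero, one_mul]
    congr 1
    rw [Finset.mul_sum]
    apply Finset.sum_congr rfl
    intro j hj
    simp only [Finset.mem_Icc] at hj
    rw [show n + 1 - j = (n - j) + 1 by omega, pow_succ]
    ring
  have main : ∀ t : ℕ, ∑ j ∈ Finset.Icc 1 t, α j / (ε + θ j) ≤
      Real.log (ε + θ t) - Real.log ε - t * Real.log β2 := by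
    intro t
    induction t with
    | zero => simp [hθ0]
    | succ n ih =>
      rw [Finset.sum_Icc_succ_top (by omega : 1 ≤ n + 1)]
      have hstep : α (n + 1) / (ε + θ (n + 1)) ≤
          Real.log (ε + θ (n + 1)) - (Real.log β2 + Real.log (ε + θ n)) := by
        have hc : 0 < β2 * (ε + θ n) := mul_pos hβ2pos (hθpos n)
        have hcx : β2 * (ε + θ n) ≤ (ε + θ (n + 1)) - α (n + 1) := by
          rw [hrec n]; nlinarith [hθnn n]
        have := key_ineq (α (n+1)) (ε + θ (n+1)) (β2 * (ε + θ n)) (hα _) hc hcx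
        rwa [Real.log_mul hβ2pos.ne' (hθpos n).ne'] at this
      push_cast
      linarith
  intro t _
  have h := main t
  have : Real.log (1 + θ t / ε) = Real.log (ε + θ t) - Real.log ε := by
    rw [← Real.log_div (hθpos t).ne' hε.ne']
    congr 1
    field_simp
  linarith
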